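/- Let n ≥ 1, y : Fin n → Y true labels over a finite type Y, Φ : Fin n → Y → ℝ^d, τ = (1/n)∑_i Φ i (y i), and let τ̂ ∈ ℝ^d, λ ∈ ℝ^d with λ ≥ 0 componentwise. For μ* ∈ ℝ^d define the minimax risk value R = −τ̂ᵀμ* + λᵀ|μ*| + (1/n)∑_i log(∑_{ỹ} exp(Φ i ỹ ᵀ μ*)) and predictions h_i(ŷ) = exp(Φ i ŷ ᵀ μ*)/∑_{ỹ} exp(Φ i ỹ ᵀ μ*). Then (1/n)∑_{i=1}^n (−log h_i(y i)) ≤ R + (|τ − τ̂| − λ)ᵀ|μ*|. -/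
import Mathlib


theorem log_loss_risk_bound {Y : Type*} [Fintype Y] [Nonempty Y]
    {n d : ℕ} (hn : 1 ≤ n)
    (y : Fin n → Y) (Φ : Fin n → Y → Fin d → ℝ) (tau that lam : Fin d → ℝ)
    (htau : ∀ j, tau j = (1 / (n : ℝ)) * ∑ i, Φ i (y i) j)
    (hlam : ∀ j, 0 ≤ lam j)
    (μstar : Fin d → ℝ) (R : ℝ)
    (hR : R = -(∑ j, that j * μstar j) + (∑ j, lam j * |μstar j|) +
      (1 / (n : ℝ)) * ∑ i, Real.log (∑ yt, Real.exp (∑ j, Φ i yt j * μstar j)))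
    (h : Fin n → Y → ℝ)
    (hh : ∀ i yh, h i yh =
      Real.exp (∑ j, Φ i yh j * μstar j) /
        ∑ yt, Real.exp (∑ j, Φ i yt j * μstar j)) :
    (1 / (n : ℝ)) * ∑ i, -Real.log (h i (y i)) ≤
      R + ∑ j, (|tau j - that j| - lam j) * |μstar j| := by
  have hnpos : (0:ℝ) < n := by exact_mod_cast hn
  have hZpos : ∀ i : Fin n, 0 < ∑ yt, Real.exp (∑ j, Φ i yt j * μstar j) := fun i =>
    Finset.sum_pos (fun yt _ => Real.exp_pos _) Finset.univ_nonempty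
  have hlog : ∀ i : Fin n, -Real.log (h i (y i)) =
      Real.log (∑ yt, Real.exp (∑ j, Φ i yt j * μstar j)) - ∑ j, Φ i (y i) j * μstar j := by
    intro i
    rw [hh, Real.log_div (Real.exp_ne_zero _) (hZpos i).ne', Real.log_exp]
    ring
  have hswap : ∑ i, ∑ j, Φ i (y i) j * μstar j = (n:ℝ) * ∑ j, tau j * μstar j := by
    rw [Finset.sum_comm, Finset.mul_sum]
    refine Finset.sum_congr rfl fun j _ => ?_
    rw [htau j, ← Finset.sum_mul]
    field_simp
  have hLHS : (1 / (n : ℝ)) * ∑ i, -Real.log (h i (y i)) =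
      (1 / (n : ℝ)) * (∑ i, Real.log (∑ yt, Real.exp (∑ j, Φ i yt j * μstar j)))
        - ∑ j, tau j * μstar j := by
    calc (1 / (n : ℝ)) * ∑ i, -Real.log (h i (y i))
        = (1 / (n : ℝ)) * ∑ i, (Real.log (∑ yt, Real.exp (∑ j, Φ i yt j * μstar j))
            - ∑ j, Φ i (y i) j * μstar j) := by
          congr 1; exact Finset.sum_congr rfl fun i _ => hlog i
      _ = (1 / (n : ℝ)) * ((∑ i, Real.log (∑ yt, Real.exp (∑ j, Φ i yt j * μstar j)))
            - ∑ i, ∑ j, Φ i (y i) j * μstar j) := by rw [Finset.sum_sub_distrib]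
      _ = _ := by rw [hswap]; field_simp
  have key : ∑ j, (that j - tau j) * μstar j ≤ ∑ j, |tau j - that j| * |μstar j| := by
    refine Finset.sum_le_sum fun j _ => ?_
    calc (that j - tau j) * μstar j ≤ |(that j - tau j) * μstar j| := le_abs_self _
      _ = |tau j - that j| * |μstar j| := by rw [abs_mul, abs_sub_comm]
  have e1 : ∑ j, (|tau j - that j| - lam j) * |μstar j|
      = (∑ j, |tau j - that j| * |μstar j|) - ∑ j, lam j * |μstar j| := by
    rw [← Finset.sum_sub_distrib]
    exact Finset.sum_congr rfl fun j _ => by ring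
  have e2 : ∑ j, (that j - tau j) * μstar j
      = (∑ j, that j * μstar j) - ∑ j, tau j * μstar j := by
    rw [← Finset.sum_sub_distrib]
    exact Finset.sum_congr rfl fun j _ => by ring
  rw [hLHS, hR]
  linarith [key, e1, e2]
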